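/- Let R be a domain, n ≥ 1, and B = R[x₁^{±1},…,xₙ^{±1}] the Laurent polynomial ring in n variables over R. Let M be a submonoid of ℤⁿ and R[M] the R-subalgebra of B generated by the monomials x^a with a ∈ M. If R[M] is algebraically closed in B, then R[M] is quasi-factorially closed in B. -/

import Mathlib

/-- An `R`-subalgebra `A` of `B` is quasi-factorially closed (qfc) in `B`. -/
def IsQfc {R B : Type*} [CommSemiring R] [CommRing B] [Algebra R B] (A : Subalgebra R B) : Prop :=
  ∀ a b : B, a ≠ 0 → b ≠ 0 → a * b ∈ A →
    ∃ u v : Bˣ, (u : B) * a ∈ A ∧ (v : B) * b ∈ A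

/-- `A` is algebraically closed (ac) in `B` if every element of `B` that is a root of a
nonzero polynomial with coefficients in `A` belongs to `A`. -/
def IsAc {R B : Type*} [CommSemiring R] [CommRing B] [Algebra R B] (A : Subalgebra R B) : Prop :=
  ∀ b : B, (∃ f : Polynomial ↥A, f ≠ 0 ∧ Polynomial.aeval b f = 0) → b ∈ A

/-- For a submonoid `M ⊆ ℤⁿ`, the `R`-subalgebra `R[M]` of the Laurent polynomial ring. -/
noncomputable def monomialSubalgebra (R : Type*) [CommRing R] {n : ℕ}
    (M : AddSubmonoid (Fin n → ℤ)) : Subalgebra R (AddMonoidAlgebra R (Fin n → ℤ)) :=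
  Algebra.adjoin R (AddMonoidAlgebra.of' R (Fin n → ℤ) '' (M : Set (Fin n → ℤ)))



open Finset in
lemma ratSolve {ι κ : Type*} [Fintype ι] [Fintype κ] (A : κ → ι → ℚ) (b : κ → ℚ)
    (x : ι → ℝ) (hx : ∀ k, ∑ i, (A k i : ℝ) * x i = (b k : ℝ)) :
    ∃ y : ι → ℚ, ∀ k, ∑ i, A k i * y i = b k := by
  classical
  set V : Submodule ℚ (κ → ℚ) := Submodule.span ℚ (Set.range fun i k => A k i) with hV
  by_cases hb : b ∈ V
  · rw [hV, Submodule.mem_span_range_iff_exists_fun] at hb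
    obtain ⟨c, hc⟩ := hb
    refine ⟨c, fun k => ?_⟩
    have := congr_fun hc k
    simpa [Finset.sum_apply, mul_comm] using this
  · exfalso
    have hq : V.mkQ b ≠ 0 := by
      simpa [Submodule.Quotient.mk_eq_zero] using hb
    obtain ⟨φ, hφ⟩ : ∃ φ : Module.Dual ℚ ((κ → ℚ) ⧸ V), φ (V.mkQ b) ≠ 0 := by
      by_contra h
      push_neg at h
      exact hq ((Module.forall_dual_apply_eq_zero_iff ℚ _).1 h)
    set ψ : Module.Dual ℚ (κ → ℚ) := φ.comp V.mkQ with hψ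
    have hcol : ∀ i, ψ (fun k => A k i) = 0 := by
      intro i
      have hmem : (fun k => A k i) ∈ V := Submodule.subset_span ⟨i, rfl⟩
      have : V.mkQ (fun k => A k i) = 0 := (Submodule.Quotient.mk_eq_zero V).2 hmem
      simp [hψ, LinearMap.comp_apply, this]
    have hrep : ∀ u : κ → ℚ, ψ u = ∑ k, u k * ψ (Pi.single k 1) := by
      intro u
      conv_lhs => rw [← Finset.univ_sum_single u]
      rw [map_sum]
      refine Finset.sum_congr rfl fun k _ => ?_
      have h1 : Pi.single k (u k) = u k • (Pi.single k (1 : ℚ) : κ → ℚ) := by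
        funext j
        by_cases hkj : k = j <;> simp [Pi.single_apply, hkj]
      rw [h1, map_smul, smul_eq_mul]
    set c : κ → ℚ := fun k => ψ (Pi.single k 1) with hc
    have h0 : ∀ i, ∑ k, A k i * c k = 0 := by
      intro i
      have := hcol i
      rwa [hrep] at this
    have hbne : ∑ k, b k * c k ≠ 0 := by
      rw [← hrep]
      exact hφ
    have hreal : ((∑ k, b k * c k : ℚ) : ℝ) = 0 := by
      push_cast
      calc ∑ k, (b k : ℝ) * (c k : ℝ)
          = ∑ k, (∑ i, (A k i : ℝ) * x i) * (c k : ℝ) :=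
            Finset.sum_congr rfl fun k _ => by rw [hx k]
        _ = ∑ k, ∑ i, ((A k i : ℝ) * (c k : ℝ)) * x i := by
            refine Finset.sum_congr rfl fun k _ => ?_
            rw [Finset.sum_mul]
            exact Finset.sum_congr rfl fun i _ => by ring
        _ = ∑ i, ∑ k, ((A k i : ℝ) * (c k : ℝ)) * x i := Finset.sum_comm
        _ = ∑ i, (∑ k, (A k i : ℝ) * (c k : ℝ)) * x i := by
            refine Finset.sum_congr rfl fun i _ => ?_
            rw [Finset.sum_mul]
        _ = 0 := by
            refine Finset.sum_eq_zero fun i _ => ?_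
            have : (∑ k, (A k i : ℝ) * (c k : ℝ)) = ((∑ k, A k i * c k : ℚ) : ℝ) := by
              push_cast; rfl
            rw [this, h0 i]
            simp
    exact hbne (by exact_mod_cast hreal)


noncomputable def embR {n : ℕ} (v : Fin n → ℤ) : Fin n → ℝ := fun i => (v i : ℝ)

lemma embR_injective {n : ℕ} : Function.Injective (embR (n := n)) := by
  intro u w h
  funext i
  have := congr_fun h i
  simp only [embR] at this
  exact_mod_cast this

lemma embR_add {n : ℕ} (u w : Fin n → ℤ) : embR (u + w) = embR u + embR w := by
  funext i
  simp [embR]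

open Finset in
lemma exists_nsmul_mem_closure {n : ℕ} (S : Finset (Fin n → ℤ)) (v : Fin n → ℤ)
    (h : embR v ∈ convexHull ℝ (embR '' (S : Set (Fin n → ℤ)))) :
    ∃ N : ℕ, 0 < N ∧ N • v ∈ AddSubmonoid.closure (S : Set (Fin n → ℤ)) := by
  classical
  rw [convexHull_eq_union] at h
  simp only [Set.mem_iUnion] at h
  obtain ⟨T, hTS, hAI, hmem⟩ := h
  set T' : Finset (Fin n → ℤ) := S.filter (fun s => embR s ∈ T) with hT'
  have hT'img : T'.image embR = T := by
    apply Finset.Subset.antisymm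
    · intro y hy
      obtain ⟨s, hs, rfl⟩ := Finset.mem_image.1 hy
      exact (Finset.mem_filter.1 hs).2
    · intro y hy
      obtain ⟨s, hsS, rfl⟩ := hTS hy
      exact Finset.mem_image.2 ⟨s, Finset.mem_filter.2 ⟨hsS, hy⟩, rfl⟩
  have hT'S : T' ⊆ S := Finset.filter_subset _ _
  rw [Finset.convexHull_eq] at hmem
  obtain ⟨w, hw0, hw1, hwc⟩ := hmem
  rw [Finset.centerMass_eq_of_sum_1 _ _ hw1] at hwc
  have hsum : ∀ {β : Type} [AddCommMonoid β] (F : (Fin n → ℝ) → β),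
      ∑ y ∈ T, F y = ∑ s ∈ T', F (embR s) := by
    intro β _ F
    rw [← hT'img, Finset.sum_image (fun a _ b _ hab => embR_injective hab)]
  -- the rational linear system
  set A : Option (Fin n) → ↥T' → ℚ :=
    fun k s => Option.elim k 1 (fun i => ((s : Fin n → ℤ) i : ℚ)) with hA
  set bb : Option (Fin n) → ℚ := fun k => Option.elim k 1 (fun i => (v i : ℚ)) with hbb
  have hx : ∀ k, ∑ s : ↥T', (A k s : ℝ) * w (embR (s : Fin n → ℤ)) = (bb k : ℝ) := by
    intro k
    match k with
    | none =>
        simp only [hA, hbb, Option.elim]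
        push_cast
        simp only [one_mul]
        rw [Finset.sum_coe_sort T' (fun s => w (embR s)), ← hsum (fun y => w y)]
        exact_mod_cast hw1
    | some i =>
        simp only [hA, hbb, Option.elim]
        have hcoord := congr_fun hwc i
        rw [hsum (fun y => w y • id y)] at hcoord
        simp only [Finset.sum_apply, Pi.smul_apply, smul_eq_mul, id] at hcoord
        push_cast
        rw [Finset.sum_coe_sort T' (fun s => ((s i : ℤ) : ℝ) * w (embR s))]
        simpa [embR, mul_comm] using hcoord
  obtain ⟨y, hy⟩ := ratSolve A bb (fun s => w (embR (s : Fin n → ℤ))) hx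
  have hy1 : ∑ s : ↥T', y s = 1 := by
    have := hy none
    simpa [hA, hbb, Option.elim] using this
  have hyi : ∀ i, ∑ s : ↥T', ((s : Fin n → ℤ) i : ℚ) * y s = (v i : ℚ) := by
    intro i
    have := hy (some i)
    simpa [hA, hbb, Option.elim, mul_comm] using this
  -- affine independence transported to T'
  have hAI' : AffineIndependent ℝ (fun s : ↥T' => embR (s : Fin n → ℤ)) := by
    let e : ↥T' ↪ ↥T :=
      ⟨fun s => ⟨embR (s : Fin n → ℤ), by
          rw [← hT'img]; exact Finset.mem_image_of_mem _ s.2⟩,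
        by
          intro s s' hss'
          apply Subtype.ext
          exact embR_injective (congrArg Subtype.val hss')⟩
    have h2 := hAI.comp_embedding e
    exact h2
  -- weights agree
  have hweq : (fun s : ↥T' => ((y s : ℝ))) = fun s : ↥T' => w (embR (s : Fin n → ℤ)) := by
    have hw1' : ∑ s : ↥T', w (embR (s : Fin n → ℤ)) = 1 := by
      rw [Finset.sum_coe_sort T' (fun s => w (embR s)), ← hsum (fun y => w y)]
      exact hw1
    have hy1' : ∑ s : ↥T', ((y s : ℝ)) = 1 := by exact_mod_cast hy1
    refine (affineIndependent_iff_eq_of_fintype_affineCombination_eq ℝ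
        (fun s : ↥T' => embR (s : Fin n → ℤ))).1 hAI' _ _ hy1' hw1' ?_
    rw [Finset.univ.affineCombination_eq_linear_combination _ _ hy1',
        Finset.univ.affineCombination_eq_linear_combination _ _ hw1']
    have hrhs : ∑ s : ↥T', w (embR (s : Fin n → ℤ)) • embR (s : Fin n → ℤ) = embR v := by
      rw [Finset.sum_coe_sort T' (fun s => w (embR s) • embR s), ← hsum (fun y => w y • y)]
      simpa [id] using hwc
    have hlhs : ∑ s : ↥T', ((y s : ℝ)) • embR (s : Fin n → ℤ) = embR v := by
      funext i
      simp only [Finset.sum_apply, Pi.smul_apply, smul_eq_mul, embR]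
      have := hyi i
      have hcast := congrArg (fun q : ℚ => (q : ℝ)) this
      push_cast at hcast
      rw [← hcast]
      exact Finset.sum_congr rfl fun s _ => by ring
    rw [hrhs, hlhs]
  have hy0 : ∀ s : ↥T', 0 ≤ y s := by
    intro s
    have h1 : ((y s : ℝ)) = w (embR (s : Fin n → ℤ)) := congr_fun hweq s
    have h2 : 0 ≤ w (embR (s : Fin n → ℤ)) :=
      hw0 _ (by rw [← hT'img]; exact Finset.mem_image_of_mem _ s.2)
    rw [← h1] at h2
    exact_mod_cast h2
  -- clear denominators
  set N : ℕ := ∏ s : ↥T', (y s).den with hN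
  have hNpos : 0 < N := Finset.prod_pos fun s _ => (y s).pos
  have hdvd : ∀ s : ↥T', (y s).den ∣ N := fun s => Finset.dvd_prod_of_mem _ (Finset.mem_univ s)
  set k : ↥T' → ℕ := fun s => (y s).num.toNat * (N / (y s).den) with hk
  have hkcast : ∀ s : ↥T', ((k s : ℚ)) = y s * N := by
    intro s
    have hnum : (((y s).num.toNat : ℤ) : ℚ) = ((y s).num : ℚ) := by
      exact_mod_cast congrArg (fun z : ℤ => (z : ℚ)) (Int.toNat_of_nonneg (Rat.num_nonneg.2 (hy0 s)))
    have hden : ((y s).den : ℚ) ≠ 0 := by exact_mod_cast (y s).den_nz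
    have hNd : (N : ℚ) = ((y s).den : ℚ) * ((N / (y s).den : ℕ) : ℚ) := by
      rw [← Nat.cast_mul]
      exact_mod_cast (Nat.mul_div_cancel' (hdvd s)).symm
    calc ((k s : ℚ)) = ((y s).num : ℚ) * ((N / (y s).den : ℕ) : ℚ) := by
          rw [hk]
          push_cast
          rw [show (((y s).num.toNat : ℚ)) = ((y s).num : ℚ) from by exact_mod_cast hnum]
      _ = y s * (N : ℚ) := by
          have hmul : y s * ((y s).den : ℚ) = ((y s).num : ℚ) := by
            rw [← eq_div_iff hden]
            exact (Rat.num_div_den (y s)).symm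
          rw [hNd, ← mul_assoc, hmul]
  refine ⟨N, hNpos, ?_⟩
  have hfinal : N • v = ∑ s : ↥T', k s • (s : Fin n → ℤ) := by
    funext i
    have hQ : ∑ s : ↥T', ((k s : ℚ)) * ((s : Fin n → ℤ) i : ℚ) = (N : ℚ) * (v i : ℚ) := by
      calc ∑ s : ↥T', ((k s : ℚ)) * ((s : Fin n → ℤ) i : ℚ)
          = ∑ s : ↥T', (N : ℚ) * (((s : Fin n → ℤ) i : ℚ) * y s) := by
            refine Finset.sum_congr rfl fun s _ => ?_
            rw [hkcast s]; ring
        _ = (N : ℚ) * ∑ s : ↥T', ((s : Fin n → ℤ) i : ℚ) * y s := by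
            rw [Finset.mul_sum]
        _ = (N : ℚ) * (v i : ℚ) := by rw [hyi i]
    apply @Int.cast_injective ℚ _
    simp only [Finset.sum_apply, Pi.smul_apply]
    simp only [nsmul_eq_mul]
    push_cast
    exact hQ.symm
  rw [hfinal]
  refine AddSubmonoid.sum_mem _ fun s _ => ?_
  have hsS : (s : Fin n → ℤ) ∈ AddSubmonoid.closure (S : Set (Fin n → ℤ)) :=
    AddSubmonoid.subset_closure (hT'S s.2)
  exact nsmul_mem hsS _


open Finset in
lemma exists_min_pair {R : Type*} [CommRing R] [IsDomain R] {n : ℕ}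
    (f : (Fin n → ℝ) →ₗ[ℝ] ℝ)
    {a b : AddMonoidAlgebra R (Fin n → ℤ)} (ha : a ≠ 0) (hb : b ≠ 0)
    {s t : Fin n → ℤ} (hs : s ∈ a.coeff.support) (ht : t ∈ b.coeff.support) :
    ∃ u ∈ (a * b).coeff.support, f (embR u) ≤ f (embR (s + t)) := by
  classical
  letI : WellFoundedLT (Fin (n+1)) := Finite.to_wellFoundedLT
  set key : (Fin n → ℤ) → Lex (Fin (n+1) → ℝ) :=
    fun p => toLex (Fin.cons (f (embR p)) (embR p)) with hkey
  have keyadd : ∀ p q, key (p + q) = key p + key q := by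
    intro p q
    rw [hkey]
    dsimp only
    rw [← toLex_add]
    congr 1
    funext j
    refine Fin.cases ?_ ?_ j
    · simp [embR_add, map_add]
    · intro i
      simp [embR_add]
  have keyinj : Function.Injective key := by
    intro p q hpq
    apply embR_injective
    funext i
    have h2 := congr_fun (congrArg ofLex hpq) i.succ
    simpa [hkey] using h2
  have keyfst : ∀ p q, key p ≤ key q → f (embR p) ≤ f (embR q) := by
    intro p q h
    rcases eq_or_lt_of_le h with heq | hlt
    · have h0 := congr_fun (congrArg ofLex heq) 0
      simp only [hkey, ofLex_toLex, Fin.cons_zero] at h0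
      exact le_of_eq h0
    · obtain ⟨i, hji, hlti⟩ := hlt
      rcases eq_or_ne i 0 with rfl | hi0
      · simp only [hkey, ofLex_toLex, Fin.cons_zero] at hlti
        exact hlti.le
      · have h0 := hji 0 (Fin.pos_of_ne_zero hi0)
        simp only [hkey, ofLex_toLex, Fin.cons_zero] at h0
        exact le_of_eq h0
  obtain ⟨p0, hp0, hp0min⟩ :=
    Finset.exists_min_image a.coeff.support key (Finsupp.support_nonempty_iff.2 (by simpa using ha))
  obtain ⟨q0, hq0, hq0min⟩ :=
    Finset.exists_min_image b.coeff.support key (Finsupp.support_nonempty_iff.2 (by simpa using hb))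
  have hUA : UniqueAdd a.coeff.support b.coeff.support p0 q0 := by
    intro p q hp hq hpq
    have h1 : key p0 ≤ key p := hp0min p hp
    have h2 : key q0 ≤ key q := hq0min q hq
    have hsum : key p + key q = key p0 + key q0 := by rw [← keyadd, ← keyadd, hpq]
    have hple : key p ≤ key p0 := by
      have h3 : key p + key q0 ≤ key p0 + key q0 := by
        calc key p + key q0 ≤ key p + key q := add_le_add_right h2 _
          _ = key p0 + key q0 := hsum
      exact le_of_add_le_add_right h3
    have hpeq : key p = key p0 := le_antisymm hple h1
    have hqeq : key q = key q0 := by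
      rw [hpeq] at hsum
      exact add_left_cancel hsum
    exact ⟨keyinj hpeq, keyinj hqeq⟩
  have hmem : p0 + q0 ∈ (a * b).coeff.support := by
    rw [Finsupp.mem_support_iff, AddMonoidAlgebra.coeff_mul_add_of_uniqueAdd hUA]
    exact mul_ne_zero (Finsupp.mem_support_iff.1 hp0) (Finsupp.mem_support_iff.1 hq0)
  refine ⟨p0 + q0, hmem, ?_⟩
  have h1 := keyfst _ _ (hp0min s hs)
  have h2 := keyfst _ _ (hq0min t ht)
  calc f (embR (p0 + q0)) = f (embR p0) + f (embR q0) := by rw [embR_add, map_add]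
    _ ≤ f (embR s) + f (embR t) := add_le_add h1 h2
    _ = f (embR (s + t)) := by rw [embR_add, map_add]

lemma add_mem_convexHull {R : Type*} [CommRing R] [IsDomain R] {n : ℕ}
    {a b : AddMonoidAlgebra R (Fin n → ℤ)} (ha : a ≠ 0) (hb : b ≠ 0)
    {s t : Fin n → ℤ} (hs : s ∈ a.coeff.support) (ht : t ∈ b.coeff.support) :
    embR (s + t) ∈ convexHull ℝ (embR '' ((a * b).coeff.support : Set (Fin n → ℤ))) := by
  by_contra hcon
  have hfin : (embR '' ((a * b).coeff.support : Set (Fin n → ℤ))).Finite :=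
    ((a * b).coeff.support.finite_toSet).image _
  obtain ⟨g, u, hgu, hux⟩ := geometric_hahn_banach_closed_point
    (convex_convexHull ℝ _) (hfin.isCompact_convexHull ℝ).isClosed hcon
  obtain ⟨w, hw, hwle⟩ := exists_min_pair (-(g.toLinearMap)) ha hb hs ht
  have hwK : embR w ∈ convexHull ℝ (embR '' ((a * b).coeff.support : Set (Fin n → ℤ))) :=
    subset_convexHull ℝ _ ⟨w, Finset.mem_coe.2 hw, rfl⟩
  have h5 := hgu _ hwK
  simp only [LinearMap.neg_apply, ContinuousLinearMap.coe_coe] at hwle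
  linarith

lemma mem_monomialSubalgebra_iff {R : Type*} [CommRing R] {n : ℕ}
    (M : AddSubmonoid (Fin n → ℤ)) (f : AddMonoidAlgebra R (Fin n → ℤ)) :
    f ∈ monomialSubalgebra R M ↔ ∀ s ∈ f.coeff.support, s ∈ M := by
  classical
  constructor
  · intro hf
    refine Algebra.adjoin_induction (p := fun x _ => ∀ s ∈ x.coeff.support, s ∈ M)
      ?_ ?_ ?_ ?_ hf
    · rintro x ⟨m, hm, rfl⟩ s hsx
      rw [AddMonoidAlgebra.of'_apply, AddMonoidAlgebra.coeff_single] at hsx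
      have := Finsupp.support_single_subset hsx
      rw [Finset.mem_singleton] at this
      subst this
      exact hm
    · intro r s hsx
      rw [AddMonoidAlgebra.coe_algebraMap, Function.comp_apply, AddMonoidAlgebra.coeff_single] at hsx
      have := Finsupp.support_single_subset hsx
      rw [Finset.mem_singleton] at this
      subst this
      exact M.zero_mem
    · intro x y _ _ hx hy s hsx
      rw [AddMonoidAlgebra.coeff_add] at hsx
      rcases Finset.mem_union.1 (Finsupp.support_add hsx) with h | h
      · exact hx s h
      · exact hy s h
    · intro x y _ _ hx hy s hsx
      have := AddMonoidAlgebra.support_coeff_mul_subset x y hsx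
      rw [Finset.mem_add] at this
      obtain ⟨p, hp, q, hq, rfl⟩ := this
      exact M.add_mem (hx p hp) (hy q hq)
  · intro hsupp
    have hrepr : f = ∑ s ∈ f.coeff.support, (f.coeff s) • AddMonoidAlgebra.of' R (Fin n → ℤ) s := by
      conv_lhs => rw [← AddMonoidAlgebra.sum_coeff_single f]
      rw [Finsupp.sum]
      refine Finset.sum_congr rfl fun s _ => ?_
      rw [AddMonoidAlgebra.of'_apply, AddMonoidAlgebra.smul_single, smul_eq_mul, mul_one]
    rw [hrepr]
    refine Subalgebra.sum_mem _ fun s hsx => ?_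
    refine Subalgebra.smul_mem _ ?_ _
    exact Algebra.subset_adjoin
      (show AddMonoidAlgebra.of' R (Fin n → ℤ) s ∈
          AddMonoidAlgebra.of' R (Fin n → ℤ) '' (M : Set (Fin n → ℤ)) from
        ⟨s, hsupp s hsx, rfl⟩)

set_option synthInstance.maxHeartbeats 1000000 in
lemma aeval_X_pow_sub_C {B : Type*} [CommRing B] {R : Type*} [CommRing R] [Algebra R B]
    (A : Subalgebra R B) (c : ↥A) (x : B) (N : ℕ) :
    Polynomial.aeval x (Polynomial.X ^ N - Polynomial.C c) = x ^ N - (c : B) := by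
  rw [map_sub, map_pow, Polynomial.aeval_X, Polynomial.aeval_C]
  rfl

set_option synthInstance.maxHeartbeats 1000000 in
lemma sat_of_isAc {R : Type*} [CommRing R] [IsDomain R] {n : ℕ}
    {M : AddSubmonoid (Fin n → ℤ)} (hac : IsAc (monomialSubalgebra R M))
    (v : Fin n → ℤ) (N : ℕ) (hN : N ≠ 0) (hNv : N • v ∈ M) : v ∈ M := by
  classical
  have hc : AddMonoidAlgebra.of' R (Fin n → ℤ) (N • v) ∈ monomialSubalgebra R M := by
    rw [mem_monomialSubalgebra_iff]
    intro s hs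
    rw [AddMonoidAlgebra.of'_apply, AddMonoidAlgebra.coeff_single] at hs
    have hss := Finsupp.support_single_subset hs
    rw [Finset.mem_singleton] at hss
    subst hss
    exact hNv
  have h1 : AddMonoidAlgebra.of' R (Fin n → ℤ) v ∈ monomialSubalgebra R M := by
    apply hac
    refine ⟨Polynomial.X ^ N - Polynomial.C ⟨_, hc⟩, ?_, ?_⟩
    · intro h
      have hco := congrArg (fun p => Polynomial.coeff p N) h
      simp only [Polynomial.coeff_sub, Polynomial.coeff_X_pow, if_pos rfl, if_true,
        Polynomial.coeff_C, if_neg hN, Polynomial.coeff_zero, sub_zero] at hco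
      have h2 := congrArg (Subtype.val) hco
      simpa using h2
    · rw [aeval_X_pow_sub_C]
      have hpow : (AddMonoidAlgebra.of' R (Fin n → ℤ) v) ^ N
          = AddMonoidAlgebra.of' R (Fin n → ℤ) (N • v) := by
        rw [AddMonoidAlgebra.of'_apply, AddMonoidAlgebra.single_pow, one_pow,
          ← AddMonoidAlgebra.of'_apply]
      rw [hpow]
      exact sub_eq_zero.2 rfl
  rw [mem_monomialSubalgebra_iff] at h1
  apply h1
  rw [AddMonoidAlgebra.of'_apply, AddMonoidAlgebra.coeff_single, Finsupp.support_single_ne_zero v one_ne_zero]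
  exact Finset.mem_singleton_self v

/-- If `R[M]` is algebraically closed in `B = R[x₁^{±1},…,xₙ^{±1}]`, then it is qfc in `B`. -/
theorem monomialSubalgebra_isQfc_of_isAc (R : Type*) [CommRing R] [IsDomain R]
    (n : ℕ) (hn : 1 ≤ n) (M : AddSubmonoid (Fin n → ℤ))
    (hac : IsAc (monomialSubalgebra R M)) :
    IsQfc (monomialSubalgebra R M) := by
  classical
  intro a b ha hb hab
  have hsupp : ∀ u ∈ (a * b).coeff.support, u ∈ M := (mem_monomialSubalgebra_iff M _).1 hab
  have key : ∀ s ∈ a.coeff.support, ∀ t ∈ b.coeff.support, s + t ∈ M := by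
    intro s hs t ht
    have hhull := add_mem_convexHull ha hb hs ht
    obtain ⟨N, hNpos, hNmem⟩ := exists_nsmul_mem_closure (a * b).coeff.support (s + t) hhull
    have hle : AddSubmonoid.closure ((a * b).coeff.support : Set (Fin n → ℤ)) ≤ M :=
      AddSubmonoid.closure_le.2 (fun u hu => hsupp u hu)
    exact sat_of_isAc hac (s + t) N hNpos.ne' (hle hNmem)
  obtain ⟨s0, hs0⟩ := (Finsupp.support_nonempty_iff (f := a.coeff)).2 (by simpa using ha)
  obtain ⟨t0, ht0⟩ := (Finsupp.support_nonempty_iff (f := b.coeff)).2 (by simpa using hb)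
  have hunit : ∀ w : Fin n → ℤ, (AddMonoidAlgebra.of' R (Fin n → ℤ) w) *
      (AddMonoidAlgebra.of' R (Fin n → ℤ) (-w)) = 1 := by
    intro w
    rw [AddMonoidAlgebra.of'_apply, AddMonoidAlgebra.of'_apply,
      AddMonoidAlgebra.single_mul_single, add_neg_cancel, mul_one, AddMonoidAlgebra.one_def]
  refine ⟨⟨_, _, hunit t0, by rw [mul_comm]; exact hunit t0⟩,
          ⟨_, _, hunit s0, by rw [mul_comm]; exact hunit s0⟩, ?_, ?_⟩
  · rw [mem_monomialSubalgebra_iff]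
    intro u hu
    have hmem := AddMonoidAlgebra.support_coeff_mul_subset _ a hu
    rw [Finset.mem_add] at hmem
    obtain ⟨p, hp, q, hq, rfl⟩ := hmem
    have hp' : p ∈ (Finsupp.single t0 (1 : R)).support := hp
    have hpt := Finsupp.support_single_subset hp'
    rw [Finset.mem_singleton] at hpt
    subst hpt
    rw [add_comm]
    exact key q hq p ht0
  · rw [mem_monomialSubalgebra_iff]
    intro u hu
    have hmem := AddMonoidAlgebra.support_coeff_mul_subset _ b hu
    rw [Finset.mem_add] at hmem
    obtain ⟨p, hp, q, hq, rfl⟩ := hmem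
    have hp' : p ∈ (Finsupp.single s0 (1 : R)).support := hp
    have hpt := Finsupp.support_single_subset hp'
    rw [Finset.mem_singleton] at hpt
    subst hpt
    exact key p hs0 q hq
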